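/- For all m, n ∈ ℕ, the map proj sending a surjection f : {1,…,m} → {1,…,n} to the multiset of its fiber cardinalities induces a bijection from the set of orbits of Surj(m,n) under the action of S_n × S_m given by (σ,τ)·f = σ ∘ f ∘ τ⁻¹, onto the set Part(m,n) of partitions of m into n parts. -/

import Mathlib

/-- The multiset of fiber cardinalities of a map `f : Fin a → Fin b`. -/
def proj {a b : ℕ} (f : Fin a → Fin b) : Multiset ℕ :=
  Multiset.map (fun i : Fin b => (Finset.univ.filter fun j => f j = i).card)
    (Finset.univ : Finset (Fin b)).val

/-- The orbit relation on the set `Surj(m,n)` of surjections `Fin m → Fin n` for the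
action of `S_n × S_m` given by `(σ, τ) · f = σ ∘ f ∘ τ⁻¹`. -/
def SurjRel (m n : ℕ) (f g : {f : Fin m → Fin n // Function.Surjective f}) : Prop :=
  ∃ (σ : Equiv.Perm (Fin n)) (τ : Equiv.Perm (Fin m)), (g : Fin m → Fin n) = ⇑σ ∘ (f : Fin m → Fin n) ∘ ⇑τ⁻¹

lemma map_univ_comp_perm {k : ℕ} {α : Type*} (u : Fin k → α) (σ : Equiv.Perm (Fin k)) :
    Multiset.map (u ∘ σ) Finset.univ.val = Multiset.map u Finset.univ.val := by
  rw [← Multiset.map_map, Multiset.map_univ_val_equiv]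

lemma exists_perm_of_map_univ_eq {k : ℕ} {u v : Fin k → ℕ}
    (h : Multiset.map u Finset.univ.val = Multiset.map v Finset.univ.val) :
    ∃ σ : Equiv.Perm (Fin k), u = v ∘ σ := by
  have h' : (↑(List.ofFn u) : Multiset ℕ) = ↑(List.ofFn v) := by
    rw [← Fin.univ_val_map, ← Fin.univ_val_map]; exact_mod_cast h
  have hperm : List.Perm (List.ofFn u) (List.ofFn v) := Multiset.coe_eq_coe.mp h'
  have h1 : List.Perm (List.ofFn (u ∘ Tuple.sort u)) (List.ofFn (v ∘ Tuple.sort v)) :=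
    ((Tuple.sort u).ofFn_comp_perm u).trans
      (hperm.trans ((Tuple.sort v).ofFn_comp_perm v).symm)
  have heq : u ∘ Tuple.sort u = v ∘ Tuple.sort v :=
    List.ofFn_injective <| List.Perm.eq_of_sortedLE
      (Tuple.monotone_sort u).sortedLE_ofFn (Tuple.monotone_sort v).sortedLE_ofFn h1
  refine ⟨(Tuple.sort u).symm.trans (Tuple.sort v), ?_⟩
  funext x
  have := congrFun heq ((Tuple.sort u).symm x)
  simpa using this

/-- Fiber cardinalities are invariant under precomposition with a permutation. -/
lemma fiber_card_comp_perm {m n : ℕ} (f : Fin m → Fin n) (τ : Equiv.Perm (Fin m)) (i : Fin n) :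
    (Finset.univ.filter fun j => f (τ j) = i).card
      = (Finset.univ.filter fun j => f j = i).card := by
  refine Finset.card_bij' (fun j _ => τ j) (fun j _ => τ.symm j) ?_ ?_ ?_ ?_ <;>
    intro a ha <;>
      simp only [Finset.mem_filter, Finset.mem_univ, true_and] at ha ⊢ <;>
        simp [ha]

lemma proj_invariant {m n : ℕ} (f : Fin m → Fin n) (σ : Equiv.Perm (Fin n))
    (τ : Equiv.Perm (Fin m)) : proj (⇑σ ∘ f ∘ ⇑τ⁻¹) = proj f := by
  unfold proj
  have step1 : ∀ i : Fin n,
      (Finset.univ.filter fun j => (⇑σ ∘ f ∘ ⇑τ⁻¹) j = i).card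
        = (Finset.univ.filter fun j => f j = σ.symm i).card := by
    intro i
    have h : ∀ j, ((⇑σ ∘ f ∘ ⇑τ⁻¹) j = i) ↔ (f (τ⁻¹ j) = σ.symm i) := by
      intro j; simp [Function.comp, Equiv.eq_symm_apply]
    simp only [h]
    exact fiber_card_comp_perm f τ⁻¹ (σ.symm i)
  calc Multiset.map (fun i : Fin n => (Finset.univ.filter fun j => (⇑σ ∘ f ∘ ⇑τ⁻¹) j = i).card)
        Finset.univ.val
      = Multiset.map ((fun i : Fin n => (Finset.univ.filter fun j => f j = i).card) ∘ σ.symm)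
        Finset.univ.val := by
        apply Multiset.map_congr rfl
        intro i _
        exact step1 i
    _ = _ := map_univ_comp_perm _ σ.symm

lemma proj_props {m n : ℕ} (f : {f : Fin m → Fin n // Function.Surjective f}) :
    Multiset.card (proj (f : Fin m → Fin n)) = n ∧ (proj (f : Fin m → Fin n)).sum = m ∧
      ∀ x ∈ proj (f : Fin m → Fin n), 0 < x := by
  obtain ⟨f, hf⟩ := f
  refine ⟨by simp [proj], ?_, ?_⟩
  · show (Multiset.map _ _).sum = m
    have h : (Multiset.map (fun i : Fin n => (Finset.univ.filter fun j => f j = i).card)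
        Finset.univ.val).sum
        = ∑ i : Fin n, (Finset.univ.filter fun j => f j = i).card := rfl
    rw [h, ← Finset.card_eq_sum_card_fiberwise (fun x _ => Finset.mem_univ (f x))]
    simp
  · intro x hx
    simp only [proj, Multiset.mem_map] at hx
    obtain ⟨i, -, rfl⟩ := hx
    obtain ⟨j, hj⟩ := hf i
    exact Finset.card_pos.mpr ⟨j, by simp [hj]⟩

/-- The descended map from orbits to partitions. -/
def Phi (m n : ℕ) : Quot (SurjRel m n) →
    {μ : Multiset ℕ // Multiset.card μ = n ∧ μ.sum = m ∧ ∀ x ∈ μ, 0 < x} :=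
  Quot.lift (fun f => ⟨proj (f : Fin m → Fin n), proj_props f⟩)
    (by
      rintro f g ⟨σ, τ, hg⟩
      apply Subtype.ext
      show proj (f : Fin m → Fin n) = proj (g : Fin m → Fin n)
      rw [hg, proj_invariant])

/-- The fiber of the first projection of a sigma of `Fin`s. -/
def sigmaFstFiber {n : ℕ} (c : Fin n → ℕ) (i : Fin n) :
    {p : Σ j : Fin n, Fin (c j) // p.1 = i} ≃ Fin (c i) where
  toFun p := Fin.cast (congrArg c p.2) p.1.2
  invFun x := ⟨⟨i, x⟩, rfl⟩
  left_inv := by rintro ⟨⟨j, x⟩, rfl⟩; rfl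
  right_inv x := rfl

lemma Phi_injective (m n : ℕ) : Function.Injective (Phi m n) := by
  classical
  intro x y
  induction x using Quot.ind with | _ f =>
  induction y using Quot.ind with | _ g =>
  intro hxy
  have h : proj (f : Fin m → Fin n) = proj (g : Fin m → Fin n) := congrArg Subtype.val hxy
  obtain ⟨σ, hσ⟩ := exists_perm_of_map_univ_eq h
  have hcard : ∀ i : Fin n,
      Fintype.card {x // (f : Fin m → Fin n) x = i}
        = Fintype.card {x // (g : Fin m → Fin n) x = σ i} := by
    intro i
    rw [Fintype.card_subtype, Fintype.card_subtype]
    exact congrFun hσ i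
  let F : ∀ i : Fin n, {x // (f : Fin m → Fin n) x = i} ≃ {x // (g : Fin m → Fin n) x = σ i} :=
    fun i => Fintype.equivOfCardEq (hcard i)
  let τ : Equiv.Perm (Fin m) :=
    ((Equiv.sigmaFiberEquiv (f : Fin m → Fin n)).symm.trans
      (Equiv.sigmaCongr σ F)).trans (Equiv.sigmaFiberEquiv (g : Fin m → Fin n))
  have hτ : ∀ x, (g : Fin m → Fin n) (τ x) = σ ((f : Fin m → Fin n) x) := by
    intro x
    have h2 : τ x = (F ((f : Fin m → Fin n) x) ⟨x, rfl⟩ : _).1 := by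
      simp [τ, Equiv.sigmaCongr, Equiv.sigmaCongrRight, Equiv.sigmaCongrLeft,
        Equiv.sigmaFiberEquiv]
    rw [h2]
    exact (F ((f : Fin m → Fin n) x) ⟨x, rfl⟩).2
  apply Quot.sound
  refine ⟨σ, τ, ?_⟩
  funext x
  simp only [Function.comp_apply]
  rw [← hτ (τ⁻¹ x)]
  simp

lemma Phi_surjective (m n : ℕ) : Function.Surjective (Phi m n) := by
  classical
  rintro ⟨μ, hcard, hsum, hpos⟩
  induction μ using Quotient.inductionOn with | _ l =>
  have hlen : l.length = n := by simpa using hcard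
  set c : Fin n → ℕ := fun i => l.get (Fin.cast hlen.symm i) with hc
  have hofn : List.ofFn c = l := by
    subst hlen
    simp [hc, List.ofFn_get]
  have hmapc : Multiset.map c Finset.univ.val = (⟦l⟧ : Multiset ℕ) := by
    rw [Fin.univ_val_map, hofn]; rfl
  have hcsum : ∑ i : Fin n, c i = m := by
    have h2 : (Multiset.map c Finset.univ.val).sum = m := by rw [hmapc]; exact hsum
    simpa [Finset.sum] using h2
  have hcpos : ∀ i, 0 < c i := by
    intro i
    apply hpos
    rw [← hmapc]
    exact Multiset.mem_map_of_mem _ (Finset.mem_univ i)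
  have hcardsig : Fintype.card (Σ i : Fin n, Fin (c i)) = Fintype.card (Fin m) := by
    simp [Fintype.card_sigma, hcsum]
  let e0 : (Σ i : Fin n, Fin (c i)) ≃ Fin m := Fintype.equivOfCardEq hcardsig
  let f : Fin m → Fin n := fun x => (e0.symm x).1
  have hfsurj : Function.Surjective f := by
    intro i
    exact ⟨e0 ⟨i, ⟨0, hcpos i⟩⟩, by simp [f]⟩
  have hfib : ∀ i : Fin n, (Finset.univ.filter fun j => f j = i).card = c i := by
    intro i
    rw [← Fintype.card_subtype]
    rw [Fintype.card_congr ((Equiv.subtypeEquiv e0.symm (fun j => Iff.rfl)).trans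
      (sigmaFstFiber c i))]
    exact Fintype.card_fin _
  refine ⟨Quot.mk _ ⟨f, hfsurj⟩, ?_⟩
  apply Subtype.ext
  show proj f = (⟦l⟧ : Multiset ℕ)
  rw [proj, ← hmapc]
  apply Multiset.map_congr rfl
  intro i _
  exact hfib i

theorem stmt3 (m n : ℕ) :
    ∃ e : Quot (SurjRel m n) ≃
        {μ : Multiset ℕ // Multiset.card μ = n ∧ μ.sum = m ∧ ∀ x ∈ μ, 0 < x},
      ∀ f : {f : Fin m → Fin n // Function.Surjective f},
        (e (Quot.mk (SurjRel m n) f) : Multiset ℕ) = proj (f : Fin m → Fin n) := by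
  exact ⟨Equiv.ofBijective (Phi m n) ⟨Phi_injective m n, Phi_surjective m n⟩, fun f => rfl⟩
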